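/- Let δ be a permutation of the Fano plane F with ind(δ) = 0, let L be a line of F, and let p be a point of F lying neither on L nor on the unique δ-line disjoint from L. Then G_δ contains an automorphism f of F such that f(p) = p and f permutes the three points of L cyclically (the restriction of f to L is a 3-cycle). -/

import Mathlib

/-- The Fano plane: the 7 nonzero vectors of `(ZMod 2)³`. -/
abbrev FanoPoint : Type := {v : Fin 3 → ZMod 2 // v ≠ 0}

/-- A line of the Fano plane: a set `{x, y, x + y}` with `x ≠ y` nonzero. -/
def IsFanoLine (L : Set FanoPoint) : Prop :=
  ∃ x y : FanoPoint, x ≠ y ∧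
    L = {z : FanoPoint | z.1 = x.1 ∨ z.1 = y.1 ∨ z.1 = x.1 + y.1}

/-- An automorphism of the Fano plane: a bijection mapping every line to a line. -/
def IsFanoAut (f : Equiv.Perm FanoPoint) : Prop :=
  ∀ L : Set FanoPoint, IsFanoLine L → IsFanoLine (⇑f '' L)

/-- A `δ`-line: the preimage under `δ` of a line. -/
def IsDeltaLine (δ : Equiv.Perm FanoPoint) (S : Set FanoPoint) : Prop :=
  ∃ L : Set FanoPoint, IsFanoLine L ∧ S = ⇑δ ⁻¹' L

private lemma exists_preimage' {β : Type*} [Finite β] {P : β → Prop} {F : β → β}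
    (hF : Function.Injective F) (h : ∀ b, P b → P (F b)) {b : β} (hb : P b) :
    ∃ b', P b' ∧ F b' = b := by
  have hGinj : Function.Injective (fun x : {x // P x} => (⟨F x.1, h _ x.2⟩ : {x // P x})) := by
    intro x y hxy
    exact Subtype.ext (hF (congrArg Subtype.val hxy))
  obtain ⟨x, hx⟩ := (Finite.injective_iff_surjective.mp hGinj) ⟨b, hb⟩
  exact ⟨x.1, x.2, congrArg Subtype.val hx⟩

private lemma preserved_inv {P : Set FanoPoint → Prop} {f : Equiv.Perm FanoPoint}
    (h : ∀ S, P S → P (⇑f '' S)) : ∀ S, P S → P (⇑f⁻¹ '' S) := by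
  intro S hS
  obtain ⟨S', hS', hEq⟩ := exists_preimage' (F := fun T => ⇑f '' T)
    (Set.image_injective.mpr f.injective) h hS
  rw [← hEq, Set.image_image]
  have : (fun x => f⁻¹ (f x)) = fun x : FanoPoint => x := by
    funext x; simp
  rw [this, Set.image_id']
  exact hS'

/-- The full automorphism group of the Fano plane. -/
def fanoAutGroup : Subgroup (Equiv.Perm FanoPoint) where
  carrier := {f | IsFanoAut f}
  one_mem' := by intro L hL; simpa using hL
  mul_mem' := by
    intro a b ha hb L hL
    rw [Equiv.Perm.coe_mul, Set.image_comp]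
    exact ha _ (hb L hL)
  inv_mem' := by
    intro f hf
    exact preserved_inv hf

/-- `G_δ`: the group of automorphisms of the Fano plane mapping every `δ`-line to a
`δ`-line. -/
def Gdelta (δ : Equiv.Perm FanoPoint) : Subgroup (Equiv.Perm FanoPoint) where
  carrier := {f | IsFanoAut f ∧ ∀ S, IsDeltaLine δ S → IsDeltaLine δ (⇑f '' S)}
  one_mem' := by
    constructor
    · intro L hL; simpa using hL
    · intro S hS; simpa using hS
  mul_mem' := by
    rintro a b ⟨ha1, ha2⟩ ⟨hb1, hb2⟩
    constructor
    · intro L hL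
      rw [Equiv.Perm.coe_mul, Set.image_comp]
      exact ha1 _ (hb1 L hL)
    · intro S hS
      rw [Equiv.Perm.coe_mul, Set.image_comp]
      exact ha2 _ (hb2 S hS)
  inv_mem' := by
    rintro f ⟨h1, h2⟩
    exact ⟨preserved_inv h1, preserved_inv h2⟩

/-- `ind(δ)`: the number of lines `L` such that `δ(L)` is a line. -/
noncomputable def fanoIndex (δ : Equiv.Perm FanoPoint) : ℕ :=
  {L : Set FanoPoint | IsFanoLine L ∧ IsFanoLine (⇑δ '' L)}.ncard

noncomputable def thd (x y : FanoPoint) : FanoPoint :=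
  if h : x.1 + y.1 = 0 then x else ⟨_, h⟩

def mem3 (u v z : FanoPoint) : Prop := z.1 = u.1 ∨ z.1 = v.1 ∨ z.1 = u.1 + v.1

instance (u v z : FanoPoint) : Decidable (mem3 u v z) := by unfold mem3; infer_instance

set_option synthInstance.maxSize 4000 in
set_option maxHeartbeats 4000000 in
theorem mem3_iff : ∀ x y z : FanoPoint, x ≠ y → (mem3 x y z ↔ (z = x ∨ z = y ∨ z = thd x y)) := by
  decide

set_option synthInstance.maxSize 4000 in
theorem thd_comm : ∀ x y : FanoPoint, thd x y = thd y x := by decide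

set_option synthInstance.maxSize 4000 in
theorem thd_self : ∀ x : FanoPoint, thd x x = x := by decide

set_option synthInstance.maxSize 4000 in
theorem thd_ne : ∀ x y : FanoPoint, x ≠ y → thd x y ≠ x ∧ thd x y ≠ y := by decide

set_option synthInstance.maxSize 4000 in
theorem thd_inv : ∀ x y : FanoPoint, x ≠ y → thd x (thd x y) = y := by decide

set_option synthInstance.maxSize 4000 in
set_option maxHeartbeats 8000000 in
theorem memC : ∀ u v x y : FanoPoint, u ≠ v → x ≠ y → mem3 u v x → mem3 u v y →
    mem3 u v (thd x y) := by decide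

set_option synthInstance.maxSize 4000 in
set_option maxHeartbeats 16000000 in
theorem memB : ∀ u v x y z : FanoPoint, u ≠ v → x ≠ y → mem3 u v x → mem3 u v y →
    z ≠ x → z ≠ y → mem3 u v z → thd x y = z := by decide

set_option synthInstance.maxSize 4000 in
set_option maxHeartbeats 8000000 in
theorem comp7 : ∀ p a b q : FanoPoint, a ≠ b → ¬ mem3 a b p →
    (q = p ∨ q = a ∨ q = b ∨ q = thd a b ∨ q = thd p a ∨ q = thd p b ∨
      q = thd p (thd a b)) := by decide

set_option synthInstance.maxSize 4000 in
set_option maxHeartbeats 8000000 in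
theorem dist21 : ∀ p a b : FanoPoint, a ≠ b → p ≠ a → p ≠ b → p ≠ thd a b →
    (p ≠ thd p a ∧ p ≠ thd p b ∧ p ≠ thd p (thd a b) ∧
     a ≠ thd a b ∧ b ≠ thd a b ∧
     a ≠ thd p a ∧ a ≠ thd p b ∧ a ≠ thd p (thd a b) ∧
     b ≠ thd p a ∧ b ≠ thd p b ∧ b ≠ thd p (thd a b) ∧
     thd a b ≠ thd p a ∧ thd a b ≠ thd p b ∧ thd a b ≠ thd p (thd a b) ∧
     thd p a ≠ thd p b ∧ thd p a ≠ thd p (thd a b) ∧ thd p b ≠ thd p (thd a b)) := by decide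

set_option synthInstance.maxSize 4000 in
set_option maxHeartbeats 8000000 in
theorem tbl : ∀ p a b : FanoPoint, a ≠ b → p ≠ a → p ≠ b → p ≠ thd a b →
    (thd a (thd a b) = b ∧ thd b (thd a b) = a ∧
     thd a (thd p b) = thd p (thd a b) ∧
     thd b (thd p a) = thd p (thd a b) ∧
     thd (thd a b) (thd p a) = thd p b) := by decide
theorem line_iff {M : Set FanoPoint} :
    IsFanoLine M ↔ ∃ x y : FanoPoint, x ≠ y ∧ M = ({x, y, thd x y} : Set FanoPoint) := by
  constructor
  · rintro ⟨x, y, hxy, rfl⟩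
    exact ⟨x, y, hxy, Set.ext fun z => by
      simpa [Set.mem_insert_iff, mem3] using mem3_iff x y z hxy⟩
  · rintro ⟨x, y, hxy, rfl⟩
    exact ⟨x, y, hxy, Set.ext fun z => by
      simpa [Set.mem_insert_iff, mem3] using (mem3_iff x y z hxy).symm⟩

theorem preimage_triple (e : Equiv.Perm FanoPoint) (u v w : FanoPoint) :
    ⇑e ⁻¹' ({u, v, w} : Set FanoPoint) = {e.symm u, e.symm v, e.symm w} := by
  ext z
  simp [Set.mem_insert_iff, Equiv.eq_symm_apply, eq_comm]

noncomputable def dthd (δ : Equiv.Perm FanoPoint) (x y : FanoPoint) : FanoPoint :=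
  δ.symm (thd (δ x) (δ y))

theorem delta_iff {δ : Equiv.Perm FanoPoint} {S : Set FanoPoint} :
    IsDeltaLine δ S ↔ ∃ x y : FanoPoint, x ≠ y ∧ S = ({x, y, dthd δ x y} : Set FanoPoint) := by
  constructor
  · rintro ⟨M, hM, rfl⟩
    obtain ⟨u, v, huv, rfl⟩ := line_iff.mp hM
    refine ⟨δ.symm u, δ.symm v, fun h => huv (by simpa using congrArg δ h), ?_⟩
    rw [preimage_triple]
    unfold dthd
    rw [Equiv.apply_symm_apply, Equiv.apply_symm_apply]
  · rintro ⟨x, y, hxy, rfl⟩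
    refine ⟨{δ x, δ y, thd (δ x) (δ y)},
      line_iff.mpr ⟨δ x, δ y, fun h => hxy (δ.injective h), rfl⟩, ?_⟩
    rw [preimage_triple, Equiv.symm_apply_apply, Equiv.symm_apply_apply]
    rfl

theorem no_common {δ : Equiv.Perm FanoPoint} (h0 : fanoIndex δ = 0) :
    ∀ M : Set FanoPoint, IsFanoLine M → IsDeltaLine δ M → False := by
  intro M hM hD
  obtain ⟨Lw, hLw, rfl⟩ := hD
  have hmem : (⇑δ ⁻¹' Lw) ∈ {L : Set FanoPoint | IsFanoLine L ∧ IsFanoLine (⇑δ '' L)} := by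
    refine ⟨hM, ?_⟩
    rw [Set.image_preimage_eq Lw δ.surjective]
    exact hLw
  have hfin : {L : Set FanoPoint | IsFanoLine L ∧ IsFanoLine (⇑δ '' L)}.Finite := Set.toFinite _
  have h := (Set.ncard_eq_zero hfin).mp h0
  rw [h] at hmem
  exact hmem

section DTools
variable (δ : Equiv.Perm FanoPoint)

abbrev dmem (u v z : FanoPoint) : Prop := z = u ∨ z = v ∨ z = dthd δ u v

theorem dmem_iff {u v : FanoPoint} (h : u ≠ v) (z : FanoPoint) :
    dmem δ u v z ↔ mem3 (δ u) (δ v) (δ z) := by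
  rw [mem3_iff _ _ _ (fun hh => h (δ.injective hh))]
  unfold dmem dthd
  rw [Equiv.apply_eq_iff_eq, Equiv.apply_eq_iff_eq, ← Equiv.eq_symm_apply]

theorem dC {u v x y : FanoPoint} (huv : u ≠ v) (hxy : x ≠ y)
    (hx : dmem δ u v x) (hy : dmem δ u v y) : dmem δ u v (dthd δ x y) := by
  rw [dmem_iff δ huv] at hx hy ⊢
  unfold dthd
  rw [Equiv.apply_symm_apply]
  exact memC _ _ _ _ (fun hh => huv (δ.injective hh)) (fun hh => hxy (δ.injective hh)) hx hy

theorem dB {u v x y z : FanoPoint} (huv : u ≠ v) (hxy : x ≠ y)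
    (hx : dmem δ u v x) (hy : dmem δ u v y) (hzx : z ≠ x) (hzy : z ≠ y)
    (hz : dmem δ u v z) : dthd δ x y = z := by
  rw [dmem_iff δ huv] at hx hy hz
  have h := memB _ _ _ _ _ (fun hh => huv (δ.injective hh)) (fun hh => hxy (δ.injective hh))
    hx hy (fun hh => hzx (δ.injective hh)) (fun hh => hzy (δ.injective hh)) hz
  unfold dthd
  rw [h, Equiv.symm_apply_apply]

theorem dthd_comm (x y : FanoPoint) : dthd δ x y = dthd δ y x := by
  unfold dthd; rw [thd_comm]

theorem dthd_self (x : FanoPoint) : dthd δ x x = x := by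
  unfold dthd; rw [thd_self, Equiv.symm_apply_apply]

theorem dthd_ne {x y : FanoPoint} (h : x ≠ y) : dthd δ x y ≠ x ∧ dthd δ x y ≠ y := by
  have h2 := thd_ne (δ x) (δ y) (fun hh => h (δ.injective hh))
  unfold dthd
  constructor
  · intro hh; exact h2.1 (by simpa using congrArg δ hh)
  · intro hh; exact h2.2 (by simpa using congrArg δ hh)

theorem dthd_inv {x y : FanoPoint} (h : x ≠ y) : dthd δ x (dthd δ x y) = y := by
  unfold dthd
  rw [Equiv.apply_symm_apply, thd_inv _ _ (fun hh => h (δ.injective hh)),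
    Equiv.symm_apply_apply]

theorem sixD {x y z : FanoPoint} (hxy : x ≠ y) (h : dthd δ x y = z) :
    dthd δ y x = z ∧ dthd δ x z = y ∧ dthd δ z x = y ∧ dthd δ y z = x ∧ dthd δ z y = x := by
  have c1 : dthd δ y x = z := (dthd_comm δ y x).trans h
  have c2 : dthd δ x z = y := by rw [← h]; exact dthd_inv δ hxy
  have c4 : dthd δ y z = x := by rw [← c1]; exact dthd_inv δ hxy.symm
  exact ⟨c1, c2, (dthd_comm δ z x).trans c2, c4, (dthd_comm δ z y).trans c4⟩

theorem noFix (h0' : ∀ M : Set FanoPoint, IsFanoLine M → IsDeltaLine δ M → False)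
    {x y : FanoPoint} (h : x ≠ y) : dthd δ x y ≠ thd x y := by
  intro he
  exact h0' {x, y, thd x y} (line_iff.mpr ⟨x, y, h, rfl⟩)
    (delta_iff.mpr ⟨x, y, h, by rw [he]⟩)

theorem hpS_contra {L : Set FanoPoint} {p u w a b : FanoPoint}
    (hpS : ∀ S : Set FanoPoint, IsDeltaLine δ S → Disjoint S L → p ∉ S)
    (hL : L = ({a, b, thd a b} : Set FanoPoint)) (hpu : p ≠ u)
    (h : dthd δ p u = w)
    (h1 : p ≠ a) (h2 : p ≠ b) (h3 : p ≠ thd a b)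
    (h4 : u ≠ a) (h5 : u ≠ b) (h6 : u ≠ thd a b)
    (h7 : w ≠ a) (h8 : w ≠ b) (h9 : w ≠ thd a b) : False := by
  refine absurd (Set.mem_insert p _)
    (hpS {p, u, w} (delta_iff.mpr ⟨p, u, hpu, by rw [h]⟩) ?_)
  rw [hL, Set.disjoint_left]
  rintro q hq hq'
  simp only [Set.mem_insert_iff, Set.mem_singleton_iff] at hq hq'
  rcases hq with rfl | rfl | rfl <;> rcases hq' with h' | h' | h'
  exacts [h1 h', h2 h', h3 h', h4 h', h5 h', h6 h', h7 h', h8 h', h9 h']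

end DTools

theorem sixT {x y z : FanoPoint} (hxy : x ≠ y) (h : thd x y = z) :
    thd y x = z ∧ thd x z = y ∧ thd z x = y ∧ thd y z = x ∧ thd z y = x := by
  have c1 : thd y x = z := (thd_comm y x).trans h
  have c2 : thd x z = y := by rw [← h]; exact thd_inv x y hxy
  have c4 : thd y z = x := by rw [← c1]; exact thd_inv y x hxy.symm
  exact ⟨c1, c2, (thd_comm z x).trans c2, c4, (thd_comm z y).trans c4⟩

theorem imageTriple (g : Equiv.Perm FanoPoint) (x y z : FanoPoint) :
    ⇑g '' ({x, y, z} : Set FanoPoint) = {g x, g y, g z} := by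
  simp [Set.image_insert_eq]
theorem BAD2 (δ : Equiv.Perm FanoPoint) (L : Set FanoPoint) (p a b : FanoPoint)
    (hab : a ≠ b) (hL : L = ({a, b, thd a b} : Set FanoPoint))
    (hpa : p ≠ a) (hpb : p ≠ b) (hpc : p ≠ thd a b)
    (hpS : ∀ S : Set FanoPoint, IsDeltaLine δ S → Disjoint S L → p ∉ S)
    (h1 : dthd δ p a = b) (h2 : dthd δ p (thd a b) = thd p a) : False := by
  obtain ⟨n_p_ta, n_p_tb, n_p_tc, n_a_c, n_b_c, n_a_ta, n_a_tb, n_a_tc, n_b_ta, n_b_tb, n_b_tc,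
    n_c_ta, n_c_tb, n_c_tc, n_ta_tb, n_ta_tc, n_tb_tc⟩ := dist21 p a b hab hpa hpb hpc
  have hpm : ¬ mem3 a b p := fun hm => by
    rcases (mem3_iff a b p hab).mp hm with h | h | h
    exacts [hpa h, hpb h, hpc h]
  -- δ-line {p,a,b} gives D p b = a
  have k1 : dthd δ p b = a :=
    dB δ hpa hpb (Or.inl rfl) (Or.inr (Or.inr h1.symm)) (Ne.symm hpa) hab
      (Or.inr (Or.inl rfl))
  -- δ-line {p,c,ta} gives D p ta = c
  have k2 : dthd δ p (thd p a) = thd a b :=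
    dB δ hpc n_p_ta (Or.inl rfl) (Or.inr (Or.inr h2.symm)) (Ne.symm hpc) n_c_ta
      (Or.inr (Or.inl rfl))
  rcases comp7 p a b (dthd δ p (thd p b)) hab hpm with h | h | h | h | h | h | h
  · exact (dthd_ne δ n_p_tb).1 h
  · -- D p tb = a
    have hd := dC δ n_p_tb hpa (Or.inl rfl) (Or.inr (Or.inr h.symm))
    rw [h1] at hd
    rcases hd with h' | h' | h'
    exacts [hpb h'.symm, n_b_tb h', hab (h'.trans h).symm]
  · -- D p tb = b
    have hd := dC δ n_p_tb hpb (Or.inl rfl) (Or.inr (Or.inr h.symm))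
    rw [k1] at hd
    rcases hd with h' | h' | h'
    exacts [hpa h'.symm, n_a_tb h', hab (h'.trans h)]
  · -- D p tb = c
    have hd := dC δ n_p_tb hpc (Or.inl rfl) (Or.inr (Or.inr h.symm))
    rw [h2] at hd
    rcases hd with h' | h' | h'
    exacts [n_p_ta h'.symm, n_ta_tb h', n_c_ta (h'.trans h).symm]
  · -- D p tb = ta
    have hd := dC δ n_p_tb n_p_ta (Or.inl rfl) (Or.inr (Or.inr h.symm))
    rw [k2] at hd
    rcases hd with h' | h' | h'
    exacts [hpc h'.symm, n_c_tb h', n_c_ta (h'.trans h)]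
  · exact (dthd_ne δ n_p_tb).2 h
  · -- D p tb = tc : forbidden by hpS
    exact hpS_contra δ hpS hL n_p_tb h hpa hpb hpc
      (Ne.symm n_a_tb) (Ne.symm n_b_tb) (Ne.symm n_c_tb)
      (Ne.symm n_a_tc) (Ne.symm n_b_tc) (Ne.symm n_c_tc)

theorem BAD (δ : Equiv.Perm FanoPoint)
    (h0' : ∀ M : Set FanoPoint, IsFanoLine M → IsDeltaLine δ M → False)
    (L : Set FanoPoint) (p a b : FanoPoint)
    (hab : a ≠ b) (hL : L = ({a, b, thd a b} : Set FanoPoint))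
    (hpa : p ≠ a) (hpb : p ≠ b) (hpc : p ≠ thd a b)
    (hpS : ∀ S : Set FanoPoint, IsDeltaLine δ S → Disjoint S L → p ∉ S)
    (h1 : dthd δ p a = b) : False := by
  obtain ⟨n_p_ta, n_p_tb, n_p_tc, n_a_c, n_b_c, n_a_ta, n_a_tb, n_a_tc, n_b_ta, n_b_tb, n_b_tc,
    n_c_ta, n_c_tb, n_c_tc, n_ta_tb, n_ta_tc, n_tb_tc⟩ := dist21 p a b hab hpa hpb hpc
  have hpm : ¬ mem3 a b p := fun hm => by
    rcases (mem3_iff a b p hab).mp hm with h | h | h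
    exacts [hpa h, hpb h, hpc h]
  have k1 : dthd δ p b = a :=
    dB δ hpa hpb (Or.inl rfl) (Or.inr (Or.inr h1.symm)) (Ne.symm hpa) hab
      (Or.inr (Or.inl rfl))
  rcases comp7 p a b (dthd δ p (thd a b)) hab hpm with h | h | h | h | h | h | h
  · exact (dthd_ne δ hpc).1 h
  · -- D p c = a
    have hd := dC δ hpc hpa (Or.inl rfl) (Or.inr (Or.inr h.symm))
    rw [h1] at hd
    rcases hd with h' | h' | h'
    exacts [hpb h'.symm, n_b_c h', hab (h'.trans h).symm]
  · -- D p c = b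
    have hd := dC δ hpc hpb (Or.inl rfl) (Or.inr (Or.inr h.symm))
    rw [k1] at hd
    rcases hd with h' | h' | h'
    exacts [hpa h'.symm, n_a_c h', hab (h'.trans h)]
  · exact (dthd_ne δ hpc).2 h
  · -- D p c = ta
    exact BAD2 δ L p a b hab hL hpa hpb hpc hpS h1 h
  · -- D p c = tb : use BAD2 with roles of a,b swapped
    have hL' : L = ({b, a, thd b a} : Set FanoPoint) := by
      rw [hL, thd_comm b a]
      exact Set.insert_comm a b {thd a b}
    have hpc' : p ≠ thd b a := by rw [thd_comm]; exact hpc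
    have h2' : dthd δ p (thd b a) = thd p b := by rw [thd_comm]; exact h
    exact BAD2 δ L p b a hab.symm hL' hpb hpa hpc' hpS k1 h2'
  · -- D p c = tc
    exact noFix δ h0' hpc h

theorem AUX (δ : Equiv.Perm FanoPoint)
    (h0' : ∀ M : Set FanoPoint, IsFanoLine M → IsDeltaLine δ M → False)
    (L : Set FanoPoint) (p a b : FanoPoint)
    (hab : a ≠ b) (hL : L = ({a, b, thd a b} : Set FanoPoint))
    (hpa : p ≠ a) (hpb : p ≠ b) (hpc : p ≠ thd a b)
    (hpS : ∀ S : Set FanoPoint, IsDeltaLine δ S → Disjoint S L → p ∉ S)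
    (hma : dthd δ p a = thd p b) :
    ∃ f ∈ Gdelta δ, f p = p ∧ ⇑f '' L = L ∧ ∀ x ∈ L, f x ≠ x := by
  obtain ⟨n_p_ta, n_p_tb, n_p_tc, n_a_c, n_b_c, n_a_ta, n_a_tb, n_a_tc, n_b_ta, n_b_tb, n_b_tc,
    n_c_ta, n_c_tb, n_c_tc, n_ta_tb, n_ta_tc, n_tb_tc⟩ := dist21 p a b hab hpa hpb hpc
  obtain ⟨t1, t2, t6, t8, t10⟩ := tbl p a b hab hpa hpb hpc
  have hpm : ¬ mem3 a b p := fun hm => by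
    rcases (mem3_iff a b p hab).mp hm with h | h | h
    exacts [hpa h, hpb h, hpc h]
  -- from δ-line {p,a,tb} : D p tb = a  and D a tb = p
  have k4 : dthd δ p (thd p b) = a :=
    dB δ hpa n_p_tb (Or.inl rfl) (Or.inr (Or.inr hma.symm)) (Ne.symm hpa) n_a_tb
      (Or.inr (Or.inl rfl))
  have k7 : dthd δ a (thd p b) = p :=
    dB δ hpa n_a_tb (Or.inr (Or.inl rfl)) (Or.inr (Or.inr hma.symm)) hpa n_p_tb
      (Or.inl rfl)
  -- force D p b = tc
  have hw : dthd δ p b = thd p (thd a b) := by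
    rcases comp7 p a b (dthd δ p b) hab hpm with h | h | h | h | h | h | h
    · exact absurd h (dthd_ne δ hpb).1
    · -- = a : BAD with roles (b,a)
      have hL' : L = ({b, a, thd b a} : Set FanoPoint) := by
        rw [hL, thd_comm b a]
        exact Set.insert_comm a b {thd a b}
      have hpc' : p ≠ thd b a := by rw [thd_comm]; exact hpc
      exact (BAD δ h0' L p b a hab.symm hL' hpb hpa hpc' hpS h).elim
    · exact absurd h (dthd_ne δ hpb).2
    · -- = c : BAD with roles (b,c)
      have hL'' : L = ({b, thd a b, thd b (thd a b)} : Set FanoPoint) := by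
        rw [hL, t2, Set.insert_comm a b, Set.pair_comm a (thd a b)]
      have hpa'' : p ≠ thd b (thd a b) := by rw [t2]; exact hpa
      exact (BAD δ h0' L p b (thd a b) n_b_c hL'' hpb hpc hpa'' hpS h).elim
    · -- = ta : impossible configuration
      have k3 : dthd δ p (thd p a) = b :=
        dB δ hpb n_p_ta (Or.inl rfl) (Or.inr (Or.inr h.symm)) (Ne.symm hpb) n_b_ta
          (Or.inr (Or.inl rfl))
      exfalso
      rcases comp7 p a b (dthd δ p (thd a b)) hab hpm with h' | h' | h' | h' | h' | h' | h'
      · exact (dthd_ne δ hpc).1 h'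
      · have hd := dC δ hpc hpa (Or.inl rfl) (Or.inr (Or.inr h'.symm))
        rw [hma] at hd
        rcases hd with h'' | h'' | h''
        exacts [n_p_tb h''.symm, n_c_tb h''.symm, n_a_tb (h''.trans h').symm]
      · have hd := dC δ hpc hpb (Or.inl rfl) (Or.inr (Or.inr h'.symm))
        rw [h] at hd
        rcases hd with h'' | h'' | h''
        exacts [n_p_ta h''.symm, n_c_ta h''.symm, n_b_ta (h''.trans h').symm]
      · exact (dthd_ne δ hpc).2 h'
      · have hd := dC δ hpc n_p_ta (Or.inl rfl) (Or.inr (Or.inr h'.symm))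
        rw [k3] at hd
        rcases hd with h'' | h'' | h''
        exacts [hpb h''.symm, n_b_c h'', n_b_ta (h''.trans h')]
      · have hd := dC δ hpc n_p_tb (Or.inl rfl) (Or.inr (Or.inr h'.symm))
        rw [k4] at hd
        rcases hd with h'' | h'' | h''
        exacts [hpa h''.symm, n_a_c h'', n_a_tb (h''.trans h')]
      · exact noFix δ h0' hpc h'
    · exact absurd h (noFix δ h0' hpb)
    · exact h
  -- from δ-line {p,b,tc} : D p tc = b, D b tc = p
  have k5 : dthd δ p (thd p (thd a b)) = b :=
    dB δ hpb n_p_tc (Or.inl rfl) (Or.inr (Or.inr hw.symm)) (Ne.symm hpb) n_b_tc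
      (Or.inr (Or.inl rfl))
  have k8 : dthd δ b (thd p (thd a b)) = p :=
    dB δ hpb n_b_tc (Or.inr (Or.inl rfl)) (Or.inr (Or.inr hw.symm)) hpb n_p_tc
      (Or.inl rfl)
  -- force D p c = ta
  have hwc : dthd δ p (thd a b) = thd p a := by
    rcases comp7 p a b (dthd δ p (thd a b)) hab hpm with h | h | h | h | h | h | h
    · exact absurd h (dthd_ne δ hpc).1
    · -- = a
      have hd := dC δ hpc hpa (Or.inl rfl) (Or.inr (Or.inr h.symm))
      rw [hma] at hd
      rcases hd with h' | h' | h'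
      exacts [absurd h'.symm n_p_tb, absurd h'.symm n_c_tb, absurd (h'.trans h).symm n_a_tb]
    · -- = b
      have hd := dC δ hpc hpb (Or.inl rfl) (Or.inr (Or.inr h.symm))
      rw [hw] at hd
      rcases hd with h' | h' | h'
      exacts [absurd h'.symm n_p_tc, absurd h'.symm n_c_tc, absurd (h'.trans h).symm n_b_tc]
    · exact absurd h (dthd_ne δ hpc).2
    · exact h
    · -- = tb
      have hd := dC δ hpc n_p_tb (Or.inl rfl) (Or.inr (Or.inr h.symm))
      rw [k4] at hd
      rcases hd with h' | h' | h'
      exacts [absurd h'.symm hpa, absurd h'.symm (Ne.symm n_a_c), absurd (h'.trans h) n_a_tb]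
    · exact absurd h (noFix δ h0' hpc)
  -- from δ-line {p,c,ta} : D p ta = c, D c ta = p
  have k6 : dthd δ p (thd p a) = thd a b :=
    dB δ hpc n_p_ta (Or.inl rfl) (Or.inr (Or.inr hwc.symm)) (Ne.symm hpc) n_c_ta
      (Or.inr (Or.inl rfl))
  have k15 : dthd δ (thd a b) (thd p a) = p :=
    dB δ hpc n_c_ta (Or.inr (Or.inl rfl)) (Or.inr (Or.inr hwc.symm)) hpc n_p_ta
      (Or.inl rfl)
  -- force D a b = ta
  have hab' : dthd δ a b = thd p a := by
    rcases comp7 p a b (dthd δ a b) hab hpm with h | h | h | h | h | h | h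
    · -- = p
      have hd := dC δ hab hpa (Or.inr (Or.inr h.symm)) (Or.inl rfl)
      rw [hma] at hd
      rcases hd with h' | h' | h'
      exacts [absurd h' (Ne.symm n_a_tb), absurd h' (Ne.symm n_b_tb),
        absurd (h'.trans h) (Ne.symm n_p_tb)]
    · exact absurd h (dthd_ne δ hab).1
    · exact absurd h (dthd_ne δ hab).2
    · exact absurd h (noFix δ h0' hab)
    · exact h
    · -- = tb
      have hd := dC δ hab n_a_tb (Or.inl rfl) (Or.inr (Or.inr h.symm))
      rw [k7] at hd
      rcases hd with h' | h' | h'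
      exacts [absurd h' hpa, absurd h' hpb, absurd (h'.trans h) n_p_tb]
    · -- = tc
      have hd := dC δ hab n_b_tc (Or.inr (Or.inl rfl)) (Or.inr (Or.inr h.symm))
      rw [k8] at hd
      rcases hd with h' | h' | h'
      exacts [absurd h' hpa, absurd h' hpb, absurd (h'.trans h) n_p_tc]
  -- from δ-line {a,b,ta} : D b ta = a, D a ta = b
  have k9 : dthd δ b (thd p a) = a :=
    dB δ hab n_b_ta (Or.inr (Or.inl rfl)) (Or.inr (Or.inr hab'.symm)) hab n_a_ta
      (Or.inl rfl)
  have k10 : dthd δ a (thd p a) = b :=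
    dB δ hab n_a_ta (Or.inl rfl) (Or.inr (Or.inr hab'.symm)) hab.symm n_b_ta
      (Or.inr (Or.inl rfl))
  -- force D b c = tb
  have hbc' : dthd δ b (thd a b) = thd p b := by
    rcases comp7 p a b (dthd δ b (thd a b)) hab hpm with h | h | h | h | h | h | h
    · -- = p
      have hd := dC δ n_b_c hpb (Or.inr (Or.inr h.symm)) (Or.inl rfl)
      rw [hw] at hd
      rcases hd with h' | h' | h'
      exacts [absurd h' (Ne.symm n_b_tc), absurd h' (Ne.symm n_c_tc),
        absurd (h'.trans h) (Ne.symm n_p_tc)]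
    · -- = a
      have hn := noFix δ h0' n_b_c
      rw [t2] at hn
      exact absurd h hn
    · exact absurd h (dthd_ne δ n_b_c).1
    · exact absurd h (dthd_ne δ n_b_c).2
    · -- = ta
      have hd := dC δ n_b_c n_b_ta (Or.inl rfl) (Or.inr (Or.inr h.symm))
      rw [k9] at hd
      rcases hd with h' | h' | h'
      exacts [absurd h' hab, absurd h' n_a_c, absurd (h'.trans h) n_a_ta]
    · exact h
    · -- = tc
      have hd := dC δ n_b_c n_b_tc (Or.inl rfl) (Or.inr (Or.inr h.symm))
      rw [k8] at hd
      rcases hd with h' | h' | h'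
      exacts [absurd h' hpb, absurd h' hpc, absurd (h'.trans h) n_p_tc]
  -- force D a c = tc
  have hac' : dthd δ a (thd a b) = thd p (thd a b) := by
    rcases comp7 p a b (dthd δ a (thd a b)) hab hpm with h | h | h | h | h | h | h
    · -- = p
      have hd := dC δ n_a_c hpa (Or.inr (Or.inr h.symm)) (Or.inl rfl)
      rw [hma] at hd
      rcases hd with h' | h' | h'
      exacts [absurd h' (Ne.symm n_a_tb), absurd h' (Ne.symm n_c_tb),
        absurd (h'.trans h) (Ne.symm n_p_tb)]
    · exact absurd h (dthd_ne δ n_a_c).1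
    · -- = b
      have hn := noFix δ h0' n_a_c
      rw [t1] at hn
      exact absurd h hn
    · exact absurd h (dthd_ne δ n_a_c).2
    · -- = ta
      have hd := dC δ n_a_c n_a_ta (Or.inl rfl) (Or.inr (Or.inr h.symm))
      rw [k10] at hd
      rcases hd with h' | h' | h'
      exacts [absurd h' hab.symm, absurd h' n_b_c, absurd (h'.trans h) n_b_ta]
    · -- = tb
      have hd := dC δ n_a_c n_a_tb (Or.inl rfl) (Or.inr (Or.inr h.symm))
      rw [k7] at hd
      rcases hd with h' | h' | h'
      exacts [absurd h' hpa, absurd h' hpc, absurd (h'.trans h) n_p_tb]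
    · exact h
  -- force D ta tb = tc
  have htt : dthd δ (thd p a) (thd p b) = thd p (thd a b) := by
    rcases comp7 p a b (dthd δ (thd p a) (thd p b)) hab hpm with h | h | h | h | h | h | h
    · -- = p
      have hd := dC δ n_ta_tb n_p_ta (Or.inr (Or.inr h.symm)) (Or.inl rfl)
      rw [k6] at hd
      rcases hd with h' | h' | h'
      exacts [absurd h' n_c_ta, absurd h' n_c_tb, absurd (h'.trans h) hpc.symm]
    · -- = a
      have hd := dC δ n_ta_tb n_a_ta (Or.inr (Or.inr h.symm)) (Or.inl rfl)
      rw [k10] at hd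
      rcases hd with h' | h' | h'
      exacts [absurd h' n_b_ta, absurd h' n_b_tb, absurd (h'.trans h) hab.symm]
    · -- = b
      have hd := dC δ n_ta_tb n_b_ta (Or.inr (Or.inr h.symm)) (Or.inl rfl)
      rw [k9] at hd
      rcases hd with h' | h' | h'
      exacts [absurd h' n_a_ta, absurd h' n_a_tb, absurd (h'.trans h) hab]
    · -- = c
      have hd := dC δ n_ta_tb n_c_ta (Or.inr (Or.inr h.symm)) (Or.inl rfl)
      rw [k15] at hd
      rcases hd with h' | h' | h'
      exacts [absurd h' n_p_ta, absurd h' n_p_tb, absurd (h'.trans h) hpc]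
    · exact absurd h (dthd_ne δ n_ta_tb).1
    · exact absurd h (dthd_ne δ n_ta_tb).2
    · exact h
  -- the six-fold completions of both line tables
  have r1 := sixT hab (rfl : thd a b = thd a b)
  have r2 := sixT hpa (rfl : thd p a = thd p a)
  have r3 := sixT hpb (rfl : thd p b = thd p b)
  have r4 := sixT hpc (rfl : thd p (thd a b) = thd p (thd a b))
  have r5 := sixT n_a_tb t6
  have r6 := sixT n_b_ta t8
  have r7 := sixT n_c_ta t10
  have s1 := sixD δ hpa hma
  have s2 := sixD δ hpb hw
  have s3 := sixD δ hpc hwc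
  have s4 := sixD δ hab hab'
  have s5 := sixD δ n_b_c hbc'
  have s6 := sixD δ n_a_c hac'
  have s7 := sixD δ n_ta_tb htt
  -- the automorphism
  obtain ⟨f, hfdef⟩ : ∃ f : Equiv.Perm FanoPoint,
      f = Equiv.swap a b * Equiv.swap b (thd a b) *
          Equiv.swap (thd p a) (thd p b) * Equiv.swap (thd p b) (thd p (thd a b)) := ⟨_, rfl⟩
  have hfp : f p = p := by
    rw [hfdef]; simp only [Equiv.Perm.mul_apply]
    rw [Equiv.swap_apply_of_ne_of_ne n_p_tb n_p_tc, Equiv.swap_apply_of_ne_of_ne n_p_ta n_p_tb,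
      Equiv.swap_apply_of_ne_of_ne hpb hpc, Equiv.swap_apply_of_ne_of_ne hpa hpb]
  have hfa : f a = b := by
    rw [hfdef]; simp only [Equiv.Perm.mul_apply]
    rw [Equiv.swap_apply_of_ne_of_ne n_a_tb n_a_tc, Equiv.swap_apply_of_ne_of_ne n_a_ta n_a_tb,
      Equiv.swap_apply_of_ne_of_ne hab n_a_c, Equiv.swap_apply_left]
  have hfb : f b = thd a b := by
    rw [hfdef]; simp only [Equiv.Perm.mul_apply]
    rw [Equiv.swap_apply_of_ne_of_ne n_b_tb n_b_tc, Equiv.swap_apply_of_ne_of_ne n_b_ta n_b_tb,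
      Equiv.swap_apply_left, Equiv.swap_apply_of_ne_of_ne (Ne.symm n_a_c) (Ne.symm n_b_c)]
  have hfc : f (thd a b) = a := by
    rw [hfdef]; simp only [Equiv.Perm.mul_apply]
    rw [Equiv.swap_apply_of_ne_of_ne n_c_tb n_c_tc, Equiv.swap_apply_of_ne_of_ne n_c_ta n_c_tb,
      Equiv.swap_apply_right, Equiv.swap_apply_right]
  have hfta : f (thd p a) = thd p b := by
    rw [hfdef]; simp only [Equiv.Perm.mul_apply]
    rw [Equiv.swap_apply_of_ne_of_ne n_ta_tb n_ta_tc, Equiv.swap_apply_left,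
      Equiv.swap_apply_of_ne_of_ne (Ne.symm n_b_tb) (Ne.symm n_c_tb),
      Equiv.swap_apply_of_ne_of_ne (Ne.symm n_a_tb) (Ne.symm n_b_tb)]
  have hftb : f (thd p b) = thd p (thd a b) := by
    rw [hfdef]; simp only [Equiv.Perm.mul_apply]
    rw [Equiv.swap_apply_left, Equiv.swap_apply_of_ne_of_ne (Ne.symm n_ta_tc) (Ne.symm n_tb_tc),
      Equiv.swap_apply_of_ne_of_ne (Ne.symm n_b_tc) (Ne.symm n_c_tc),
      Equiv.swap_apply_of_ne_of_ne (Ne.symm n_a_tc) (Ne.symm n_b_tc)]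
  have hftc : f (thd p (thd a b)) = thd p a := by
    rw [hfdef]; simp only [Equiv.Perm.mul_apply]
    rw [Equiv.swap_apply_right, Equiv.swap_apply_right,
      Equiv.swap_apply_of_ne_of_ne (Ne.symm n_b_ta) (Ne.symm n_c_ta),
      Equiv.swap_apply_of_ne_of_ne (Ne.symm n_a_ta) (Ne.symm n_b_ta)]
  have hcT : ∀ u v : FanoPoint, f (thd u v) = thd (f u) (f v) := by
    intro u v
    rcases comp7 p a b u hab hpm with h1 | h1 | h1 | h1 | h1 | h1 | h1 <;>
      rcases comp7 p a b v hab hpm with h2 | h2 | h2 | h2 | h2 | h2 | h2 <;>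
      simp only [h1, h2, thd_self, t6, t8, t10,
        r1.1, r1.2.1, r1.2.2.1, r1.2.2.2.1, r1.2.2.2.2,
        r2.1, r2.2.1, r2.2.2.1, r2.2.2.2.1, r2.2.2.2.2,
        r3.1, r3.2.1, r3.2.2.1, r3.2.2.2.1, r3.2.2.2.2,
        r4.1, r4.2.1, r4.2.2.1, r4.2.2.2.1, r4.2.2.2.2,
        r5.1, r5.2.1, r5.2.2.1, r5.2.2.2.1, r5.2.2.2.2,
        r6.1, r6.2.1, r6.2.2.1, r6.2.2.2.1, r6.2.2.2.2,
        r7.1, r7.2.1, r7.2.2.1, r7.2.2.2.1, r7.2.2.2.2,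
        hfp, hfa, hfb, hfc, hfta, hftb, hftc]
  have hcD : ∀ u v : FanoPoint, f (dthd δ u v) = dthd δ (f u) (f v) := by
    intro u v
    rcases comp7 p a b u hab hpm with h1 | h1 | h1 | h1 | h1 | h1 | h1 <;>
      rcases comp7 p a b v hab hpm with h2 | h2 | h2 | h2 | h2 | h2 | h2 <;>
      simp only [h1, h2, dthd_self, hma, hw, hwc, hab', hbc', hac', htt,
        s1.1, s1.2.1, s1.2.2.1, s1.2.2.2.1, s1.2.2.2.2,
        s2.1, s2.2.1, s2.2.2.1, s2.2.2.2.1, s2.2.2.2.2,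
        s3.1, s3.2.1, s3.2.2.1, s3.2.2.2.1, s3.2.2.2.2,
        s4.1, s4.2.1, s4.2.2.1, s4.2.2.2.1, s4.2.2.2.2,
        s5.1, s5.2.1, s5.2.2.1, s5.2.2.2.1, s5.2.2.2.2,
        s6.1, s6.2.1, s6.2.2.1, s6.2.2.2.1, s6.2.2.2.2,
        s7.1, s7.2.1, s7.2.2.1, s7.2.2.2.1, s7.2.2.2.2,
        hfp, hfa, hfb, hfc, hfta, hftb, hftc]
  have hAut : IsFanoAut f := by
    intro M hM
    obtain ⟨x, y, hxy, rfl⟩ := line_iff.mp hM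
    rw [imageTriple, hcT x y]
    exact line_iff.mpr ⟨f x, f y, fun h => hxy (f.injective h), rfl⟩
  have hPres : ∀ S : Set FanoPoint, IsDeltaLine δ S → IsDeltaLine δ (⇑f '' S) := by
    intro S hS
    obtain ⟨x, y, hxy, rfl⟩ := delta_iff.mp hS
    rw [imageTriple, hcD x y]
    exact delta_iff.mpr ⟨f x, f y, fun h => hxy (f.injective h), rfl⟩
  refine ⟨f, ⟨hAut, hPres⟩, hfp, ?_, ?_⟩
  · rw [hL, imageTriple, hfa, hfb, hfc, Set.insert_comm a b, Set.pair_comm a (thd a b)]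
  · intro x hx
    rw [hL] at hx
    simp only [Set.mem_insert_iff, Set.mem_singleton_iff] at hx
    rcases hx with rfl | rfl | rfl
    · rw [hfa]; exact hab.symm
    · rw [hfb]; exact Ne.symm n_b_c
    · rw [hfc]; exact n_a_c

/-- if `ind(δ) = 0`, `L` is a line and `p` lies neither on `L` nor on the
`δ`-line disjoint from `L`, then `G_δ` contains an automorphism fixing `p` and
permuting the three points of `L` cyclically. -/
theorem stmt10 (δ : Equiv.Perm FanoPoint) (h0 : fanoIndex δ = 0)
    (L : Set FanoPoint) (hL : IsFanoLine L) (p : FanoPoint) (hpL : p ∉ L)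
    (hpS : ∀ S : Set FanoPoint, IsDeltaLine δ S → Disjoint S L → p ∉ S) :
    ∃ f ∈ Gdelta δ, f p = p ∧ ⇑f '' L = L ∧ ∀ x ∈ L, f x ≠ x := by
  have h0' := no_common h0
  obtain ⟨a, b, hab, hLt⟩ := line_iff.mp hL
  have hpm' : ¬(p = a ∨ p = b ∨ p = thd a b) := by
    rw [hLt] at hpL
    simpa only [Set.mem_insert_iff, Set.mem_singleton_iff] using hpL
  push_neg at hpm'
  obtain ⟨hpa, hpb, hpc⟩ := hpm'
  obtain ⟨n_p_ta, n_p_tb, n_p_tc, n_a_c, n_b_c, n_a_ta, n_a_tb, n_a_tc, n_b_ta, n_b_tb, n_b_tc,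
    n_c_ta, n_c_tb, n_c_tc, n_ta_tb, n_ta_tc, n_tb_tc⟩ := dist21 p a b hab hpa hpb hpc
  have hpm : ¬ mem3 a b p := fun hm => by
    rcases (mem3_iff a b p hab).mp hm with h | h | h
    exacts [hpa h, hpb h, hpc h]
  have hL2 : L = ({a, thd a b, thd a (thd a b)} : Set FanoPoint) := by
    rw [hLt, thd_inv a b hab, Set.pair_comm b (thd a b)]
  have hpb2 : p ≠ thd a (thd a b) := by rw [thd_inv a b hab]; exact hpb
  rcases comp7 p a b (dthd δ p a) hab hpm with h | h | h | h | h | h | h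
  · exact absurd h (dthd_ne δ hpa).1
  · exact absurd h (dthd_ne δ hpa).2
  · exact (BAD δ h0' L p a b hab hLt hpa hpb hpc hpS h).elim
  · exact (BAD δ h0' L p a (thd a b) n_a_c hL2 hpa hpc hpb2 hpS h).elim
  · exact absurd h (noFix δ h0' hpa)
  · exact AUX δ h0' L p a b hab hLt hpa hpb hpc hpS h
  · exact AUX δ h0' L p a (thd a b) n_a_c hL2 hpa hpc hpb2 hpS h
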